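/- For every positive even integer m and every positive integer n, F_m * (sum over k from 1 to n of L_{2mk}) = F_{mn} L_{mn+m}. -/

import Mathlib

/-- Fibonacci numbers extended to all integers via `F_{-n} = (-1)^{n-1} F_n`. -/
def fibZ (n : ℤ) : ℤ :=
  if 0 ≤ n then (Nat.fib n.toNat : ℤ) else (-1) ^ ((-n).toNat + 1) * (Nat.fib (-n).toNat : ℤ)

/-- Lucas numbers extended to all integers, `L_n = F_{n-1} + F_{n+1}`. -/
def lucasZ (n : ℤ) : ℤ := fibZ (n - 1) + fibZ (n + 1)

lemma fibZ_natCast (k : ℕ) : fibZ (k : ℤ) = (Nat.fib k : ℤ) := by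
  simp [fibZ]

lemma fibZ_add_two (n : ℤ) : fibZ (n + 2) = fibZ n + fibZ (n + 1) := by
  rcases le_or_gt 0 n with h | h
  · lift n to ℕ using h
    rw [show (n : ℤ) + 2 = ((n + 2 : ℕ) : ℤ) by push_cast; ring,
        show (n : ℤ) + 1 = ((n + 1 : ℕ) : ℤ) by push_cast; ring,
        fibZ_natCast, fibZ_natCast, fibZ_natCast, Nat.fib_add_two]
    push_cast; ring
  · rcases eq_or_lt_of_le (by omega : n ≤ -1) with h1 | h1
    · subst h1; norm_num [fibZ]
    rcases eq_or_lt_of_le (by omega : n ≤ -2) with h2 | h2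
    · subst h2; norm_num [fibZ]; decide
    obtain ⟨k, rfl⟩ : ∃ k : ℕ, n = -((k : ℤ) + 3) := ⟨(-n - 3).toNat, by omega⟩
    have e1 : -((k : ℤ) + 3) + 2 = -((k : ℤ) + 1) := by ring
    have e2 : -((k : ℤ) + 3) + 1 = -((k : ℤ) + 2) := by ring
    rw [e1, e2]
    simp only [fibZ, if_neg (by omega : ¬ (0:ℤ) ≤ -((k:ℤ)+1)),
      if_neg (by omega : ¬ (0:ℤ) ≤ -((k:ℤ)+2)), if_neg (by omega : ¬ (0:ℤ) ≤ -((k:ℤ)+3)),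
      neg_neg]
    rw [show ((k : ℤ) + 1).toNat = k + 1 by omega, show ((k : ℤ) + 2).toNat = k + 2 by omega,
        show ((k : ℤ) + 3).toNat = k + 3 by omega,
        show k + 3 = (k + 1) + 2 by ring, Nat.fib_add_two]
    push_cast [pow_succ]
    ring

lemma fibZ_zero : fibZ 0 = 0 := by norm_num [fibZ]
lemma fibZ_one : fibZ 1 = 1 := by norm_num [fibZ]
lemma fibZ_two : fibZ 2 = 1 := by norm_num [fibZ]; decide

lemma fibZ_neg_even (n : ℤ) (h : Even n) : fibZ (-n) = -fibZ n := by
  rcases lt_trichotomy n 0 with hn | hn | hn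
  · rw [fibZ, fibZ, if_pos (by omega : (0:ℤ) ≤ -n), if_neg (by omega : ¬ (0:ℤ) ≤ n)]
    have he : Even (-n).toNat := by obtain ⟨r, hr⟩ := h; exact ⟨(-r).toNat, by omega⟩
    have hp : (-1 : ℤ) ^ ((-n).toNat + 1) = -1 := by
      rw [pow_succ, he.neg_one_pow]; ring
    rw [hp]; ring
  · simp [hn, fibZ_zero]
  · rw [fibZ, fibZ, if_neg (by omega : ¬ (0:ℤ) ≤ -n), if_pos (by omega : (0:ℤ) ≤ n), neg_neg]
    have he : Even n.toNat := by obtain ⟨r, hr⟩ := h; exact ⟨r.toNat, by omega⟩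
    have hp : (-1 : ℤ) ^ (n.toNat + 1) = -1 := by
      rw [pow_succ, he.neg_one_pow]; ring
    rw [hp]; ring

lemma fibZ_neg_odd (n : ℤ) (h : Odd n) : fibZ (-n) = fibZ n := by
  rcases lt_trichotomy n 0 with hn | hn | hn
  · rw [fibZ, fibZ, if_pos (by omega : (0:ℤ) ≤ -n), if_neg (by omega : ¬ (0:ℤ) ≤ n)]
    have he : Odd (-n).toNat := by obtain ⟨r, hr⟩ := h; exact ⟨(-r-1).toNat, by omega⟩
    have hp : (-1 : ℤ) ^ ((-n).toNat + 1) = 1 := by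
      rw [pow_succ, he.neg_one_pow]; ring
    rw [hp]; ring
  · exfalso; rw [hn] at h; obtain ⟨r, hr⟩ := h; omega
  · rw [fibZ, fibZ, if_neg (by omega : ¬ (0:ℤ) ≤ -n), if_pos (by omega : (0:ℤ) ≤ n), neg_neg]
    have he : Odd n.toNat := by obtain ⟨r, hr⟩ := h; exact ⟨r.toNat, by omega⟩
    have hp : (-1 : ℤ) ^ (n.toNat + 1) = 1 := by
      rw [pow_succ, he.neg_one_pow]; ring
    rw [hp]; ring

lemma fibZ_add (a b : ℤ) : fibZ (a + b) = fibZ a * fibZ (b + 1) + fibZ (a - 1) * fibZ b := by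
  set S : ℤ → Prop := fun b => fibZ (a + b) = fibZ a * fibZ (b + 1) + fibZ (a - 1) * fibZ b with hS
  suffices h : ∀ c : ℤ, S c ∧ S (c + 1) from (h b).1
  intro c
  induction c using Int.induction_on with
  | zero =>
    constructor
    · simp only [hS]
      rw [add_zero, zero_add, fibZ_zero, fibZ_one]; ring
    · simp only [hS]
      have hr := fibZ_add_two (a - 1)
      rw [show a - 1 + 2 = a + 1 by ring, show a - 1 + 1 = a by ring] at hr
      rw [show (0:ℤ) + 1 = 1 by ring, show (1:ℤ) + 1 = 2 by ring, hr, fibZ_two, fibZ_one]; ring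
  | succ i ih =>
    refine ⟨ih.2, ?_⟩
    have h1 := ih.1
    have h2 := ih.2
    show fibZ (a + ((i:ℤ) + 1 + 1)) = _
    have r1 := fibZ_add_two (a + i)
    have r2 := fibZ_add_two ((i:ℤ))
    have r3 := fibZ_add_two ((i:ℤ) + 1)
    simp only [hS] at h1 h2
    rw [show a + ((i:ℤ) + 1 + 1) = a + (i:ℤ) + 2 by ring, r1,
        show a + (i:ℤ) + 1 = a + ((i:ℤ) + 1) by ring, h1, h2,
        show (i:ℤ) + 1 + 1 + 1 = (i:ℤ) + 1 + 2 by ring, r3,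
        show (i:ℤ) + 1 + 1 = (i:ℤ) + 2 by ring, r2]
    ring
  | pred i ih =>
    refine ⟨?_, by rw [show -(i:ℤ) - 1 + 1 = -(i:ℤ) by ring]; exact ih.1⟩
    have h1 := ih.1
    have h2 := ih.2
    simp only [hS] at h1 h2 ⊢
    have r1 := fibZ_add_two (a + (-(i:ℤ) - 1))
    have r2 := fibZ_add_two (-(i:ℤ) - 1)
    have r3 := fibZ_add_two (-(i:ℤ))
    rw [show a + (-(i:ℤ)-1) + 2 = a + (-(i:ℤ) + 1) by ring,
        show a + (-(i:ℤ)-1) + 1 = a + (-(i:ℤ)) by ring] at r1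
    rw [show -(i:ℤ) - 1 + 2 = -(i:ℤ) + 1 by ring,
        show -(i:ℤ) - 1 + 1 = -(i:ℤ) by ring] at r2
    rw [show -(i:ℤ) + 2 = -(i:ℤ) + 1 + 1 by ring] at r3
    rw [show -(i:ℤ) + 1 = -(i:ℤ) + 1 by ring] at h2
    rw [show -(i:ℤ) - 1 + 1 = -(i:ℤ) by ring]
    linear_combination (-1 : ℤ) * r1 + h2 - h1 + fibZ a * r3 + fibZ (a - 1) * r2
  
lemma fib_mul_lucas (a b : ℤ) (hb : Even b) :
    fibZ a * lucasZ b = fibZ (a + b) + fibZ (a - b) := by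
  rw [lucasZ, fibZ_add a b, show a - b = a + (-b) by ring, fibZ_add a (-b),
      show -b + 1 = -(b - 1) by ring, fibZ_neg_even b hb,
      fibZ_neg_odd (b - 1) (by rcases hb with ⟨r, hr⟩; exact ⟨r - 1, by omega⟩)]
  ring

theorem stmt18 (m : ℤ) (hm : 0 < m) (hme : Even m) (n : ℕ) (hn : 0 < n) :
    fibZ m * ∑ k ∈ Finset.Icc 1 n, lucasZ (2 * m * k)
      = fibZ (m * n) * lucasZ (m * n + m) := by
  induction n with
  | zero => omega
  | succ n ih =>
    rcases Nat.eq_zero_or_pos n with rfl | hn'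
    · norm_num
      rw [show (2:ℤ) * m = m + m by ring]
      exact Or.inl rfl
    · rw [Finset.sum_Icc_succ_top (by omega : 1 ≤ n + 1), mul_add, ih hn']
      obtain ⟨r, hr⟩ := hme
      push_cast
      rw [fib_mul_lucas (m * n) (m * n + m) ⟨r * n + r, by rw [hr]; ring⟩,
          fib_mul_lucas m (2 * m * (n + 1)) ⟨m * (n+1), by ring⟩,
          fib_mul_lucas (m * (n + 1)) (m * (n + 1) + m) ⟨r * (n+1) + r, by rw [hr]; ring⟩,
          show m * (n:ℤ) - (m * n + m) = -m by ring, fibZ_neg_even m ⟨r, hr⟩,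
          show m - 2 * m * ((n:ℤ) + 1) = -(2 * m * n + m) by ring,
          fibZ_neg_even _ ⟨r * (2 * n + 1), by rw [hr]; ring⟩,
          show m * ((n:ℤ) + 1) - (m * (n + 1) + m) = -m by ring, fibZ_neg_even m ⟨r, hr⟩,
          show m * (n:ℤ) + (m * n + m) = 2 * m * n + m by ring,
          show m + 2 * m * ((n:ℤ) + 1) = m * (n + 1) + (m * (n + 1) + m) by ring]
      ring
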